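/- Let p be a prime. If a finite group G is a 𝒫₁(p)-group, then G is a 𝒫₂(p)-group. -/

import Mathlib

open Pointwise

/-- A group is cyclic or dihedral. -/
def IsCyclicOrDihedral (H : Type*) [Group H] : Prop :=
  IsCyclic H ∨ ∃ n : ℕ, 0 < n ∧ Nonempty (H ≃* DihedralGroup n)

/-- `G` is a `𝒫₀(p)`-group with respect to `(ρ, τ)`. -/
def IsP0 (p : ℕ) {G : Type*} [Group G] (ρ τ : G) : Prop :=
  orderOf τ = 2 ∧ Subgroup.closure {ρ, τ} = ⊤ ∧
    ∃ n : ℕ, 0 < n ∧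
      Nat.card G / orderOf ρ +
          Nat.card G / Nat.card (Subgroup.closure {τ, ρ⁻¹ * τ * ρ} : Subgroup G) +
          p ^ n =
        Nat.card G / 2

/-- `G` is a `𝒫₁(p)`-group with respect to subgroups `H₁` and `H₂`. -/
def IsP1With (p : ℕ) {G : Type*} [Group G] (H₁ H₂ : Subgroup G) : Prop :=
  IsCyclicOrDihedral H₁ ∧ IsCyclicOrDihedral H₂ ∧
    ∃ n : ℕ, Nat.card G = p ^ n * Nat.lcm (Nat.card H₁) (Nat.card H₂)

/-- `G` is a `𝒫₁(p)`-group. -/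
def IsP1 (p : ℕ) (G : Type*) [Group G] : Prop :=
  ∃ H₁ H₂ : Subgroup G, IsP1With p H₁ H₂

/-- `G` is a `𝒫₁⁺(p)`-group with respect to `(ρ, τ)`. -/
def IsP1Plus (p : ℕ) {G : Type*} [Group G] (ρ τ : G) : Prop :=
  orderOf τ ≤ 2 ∧ Subgroup.closure {ρ, τ} = ⊤ ∧
    (Odd p → Subgroup.closure {ρ⁻¹ * τ⁻¹ * ρ * τ, ρ} = ⊤) ∧
    IsP1With p (Subgroup.closure {τ, ρ⁻¹ * τ * ρ}) (Subgroup.zpowers ρ)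

/-- `G` is a `𝒫₂(p)`-group. -/
def IsP2 (p : ℕ) (G : Type*) [Group G] : Prop :=
  ∀ r : ℕ, r.Prime → r ≠ p → ∀ S : Sylow r G, IsCyclicOrDihedral (S : Subgroup G)

/-- `G` is a `𝒫₂⁺(p)`-group with respect to `(ρ, τ)`. -/
def IsP2Plus (p : ℕ) {G : Type*} [Group G] (ρ τ : G) : Prop :=
  orderOf τ ≤ 2 ∧ Subgroup.closure {ρ, τ} = ⊤ ∧
    (Odd p → Subgroup.closure {ρ⁻¹ * τ⁻¹ * ρ * τ, ρ} = ⊤) ∧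
    IsP2 p G

/-- A Hall `{2,3}`-subgroup. -/
def IsHall23 {G : Type*} [Group G] (H : Subgroup G) : Prop :=
  (∃ i j : ℕ, Nat.card H = 2 ^ i * 3 ^ j) ∧ Nat.Coprime H.index 6

/-- A Hall `{2,3}'`-subgroup. -/
def IsHall23' {G : Type*} [Group G] (K : Subgroup G) : Prop :=
  Nat.Coprime (Nat.card K) 6 ∧ ∃ i j : ℕ, K.index = 2 ^ i * 3 ^ j

/-- The projective special linear group of degree 2 over `R`. -/
abbrev ProjSL2 (R : Type*) [CommRing R] : Type _ :=
  Matrix.SpecialLinearGroup (Fin 2) R ⧸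
    Subgroup.center (Matrix.SpecialLinearGroup (Fin 2) R)

/-- The projective general linear group of degree 2 over `R`. -/
abbrev ProjGL2 (R : Type*) [CommRing R] : Type _ :=
  Matrix.GeneralLinearGroup (Fin 2) R ⧸
    Subgroup.center (Matrix.GeneralLinearGroup (Fin 2) R)

section Auxiliary

variable {G : Type*}

lemma isCyclicOrDihedral_congr {A B : Type*} [Group A] [Group B] (e : A ≃* B)
    (h : IsCyclicOrDihedral A) : IsCyclicOrDihedral B := by
  rcases h with h | ⟨n, hn, ⟨f⟩⟩
  · haveI := h
    exact Or.inl (isCyclic_of_surjective e.toMonoidHom e.surjective)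
  · exact Or.inr ⟨n, hn, ⟨e.symm.trans f⟩⟩

lemma isCyclic_zpowers [Group G] (g : G) : IsCyclic ↥(Subgroup.zpowers g) := by
  refine ⟨⟨⟨g, Subgroup.mem_zpowers g⟩, ?_⟩⟩
  rintro ⟨x, hx⟩
  obtain ⟨k, hk⟩ := Subgroup.mem_zpowers_iff.mp hx
  exact Subgroup.mem_zpowers_iff.mpr ⟨k, Subtype.ext (by simpa using hk)⟩

lemma isCyclic_of_le_zpowers [Group G] {g : G} {S : Subgroup G}
    (h : S ≤ Subgroup.zpowers g) : IsCyclic ↥S := by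
  haveI := isCyclic_zpowers g
  exact isCyclic_of_surjective (Subgroup.subgroupOfEquivOfLe h).toMonoidHom
    (Subgroup.subgroupOfEquivOfLe h).surjective

lemma dihedral_of_gen {G' : Type*} [Group G'] [Finite G'] (c t : G')
    (ht2 : t * t = 1) (hconj : t * c * t = c⁻¹)
    (htc : t ∉ Subgroup.zpowers c)
    (hcover : ∀ x : G', x ∈ Subgroup.zpowers c ∨ t * x ∈ Subgroup.zpowers c) :
    ∃ n : ℕ, 0 < n ∧ Nonempty (G' ≃* DihedralGroup n) := by
  have hn0 : 0 < orderOf c := orderOf_pos c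
  haveI : NeZero (orderOf c) := ⟨hn0.ne'⟩
  have ht' : t⁻¹ = t := inv_eq_of_mul_eq_one_right ht2
  have hg : ∀ i j : ZMod (orderOf c), c ^ (i + j).val = c ^ i.val * c ^ j.val := by
    intro i j
    rw [← pow_add, pow_eq_pow_iff_modEq, ZMod.val_add]
    exact Nat.mod_modEq _ _
  have hneg : ∀ i : ZMod (orderOf c), c ^ (-i).val = (c ^ i.val)⁻¹ := by
    intro i
    refine eq_inv_of_mul_eq_one_left ?_
    rw [← hg, neg_add_cancel]
    simp
  have hct : ∀ k : ℕ, t * c ^ k * t = (c ^ k)⁻¹ := by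
    intro k
    have : t * c ^ k * t⁻¹ = (t * c * t⁻¹) ^ k := (conj_pow).symm
    rw [ht'] at this
    rw [this, hconj, inv_pow]
  have hswap : ∀ a : ℕ, c ^ a * t = t * (c ^ a)⁻¹ := by
    intro a
    rw [← hct a]
    rw [← mul_assoc, ← mul_assoc, ht2, one_mul]
  let f : DihedralGroup (orderOf c) → G' := fun x =>
    match x with
    | .r i => c ^ i.val
    | .sr i => t * c ^ i.val
  have hmul : ∀ x y : DihedralGroup (orderOf c), f (x * y) = f x * f y := by
    rintro (i | i) (j | j)
    · show c ^ (i + j).val = c ^ i.val * c ^ j.val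
      exact hg i j
    · show t * c ^ (j - i).val = c ^ i.val * (t * c ^ j.val)
      rw [← mul_assoc, hswap, mul_assoc, ← hneg, ← hg, sub_eq_neg_add]
    · show t * c ^ (i + j).val = t * c ^ i.val * c ^ j.val
      rw [hg, mul_assoc]
    · show c ^ (j - i).val = t * c ^ i.val * (t * c ^ j.val)
      rw [mul_assoc, ← mul_assoc (c ^ i.val), hswap, ← mul_assoc, ← mul_assoc, ht2, one_mul,
        ← hneg, ← hg, sub_eq_neg_add]
  let F : DihedralGroup (orderOf c) →* G' := MonoidHom.mk' f hmul
  have hvlt : ∀ i : ZMod (orderOf c), i.val ∈ Set.Iio (orderOf c) := fun i => ZMod.val_lt i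
  have hcpow : ∀ a b : ℕ, (h : c ^ a = t * c ^ b) → False := by
    intro a b h
    apply htc
    have : t = c ^ a * (c ^ b)⁻¹ := by
      rw [h, mul_assoc, mul_inv_cancel, mul_one]
    rw [this]
    exact Subgroup.mul_mem _ (Subgroup.pow_mem _ (Subgroup.mem_zpowers c) a)
      (Subgroup.inv_mem _ (Subgroup.pow_mem _ (Subgroup.mem_zpowers c) b))
  have hinj : Function.Injective F := by
    rintro (i | i) (j | j) h
    · have := pow_injOn_Iio_orderOf (hvlt i) (hvlt j) h
      exact congrArg DihedralGroup.r (ZMod.val_injective _ this)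
    · exact absurd h (fun h => hcpow _ _ h)
    · exact absurd h.symm (fun h => hcpow _ _ h)
    · have h' : c ^ i.val = c ^ j.val := mul_left_cancel h
      have := pow_injOn_Iio_orderOf (hvlt i) (hvlt j) h'
      exact congrArg DihedralGroup.sr (ZMod.val_injective _ this)
  have hnatpow : ∀ x : G', x ∈ Subgroup.zpowers c → ∃ k : ℕ, c ^ k = x := by
    intro x hx
    exact Submonoid.mem_powers_iff x c |>.mp (mem_powers_iff_mem_zpowers.mpr hx)
  have hsurj : Function.Surjective F := by
    intro x
    rcases hcover x with hx | hx
    · obtain ⟨k, hk⟩ := hnatpow x hx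
      refine ⟨.r (k : ZMod (orderOf c)), ?_⟩
      show c ^ ((k : ZMod (orderOf c))).val = x
      rw [ZMod.val_natCast, pow_mod_orderOf, hk]
    · obtain ⟨k, hk⟩ := hnatpow _ hx
      refine ⟨.sr (k : ZMod (orderOf c)), ?_⟩
      show t * c ^ ((k : ZMod (orderOf c))).val = x
      rw [ZMod.val_natCast, pow_mod_orderOf, hk, ← mul_assoc, ht2, one_mul]
  exact ⟨orderOf c, hn0, ⟨(MulEquiv.ofBijective F ⟨hinj, hsurj⟩).symm⟩⟩

lemma dihedral_inv_r {m : ℕ} (j : ZMod m) : (DihedralGroup.r j)⁻¹ = DihedralGroup.r (-j) := by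
  apply inv_eq_of_mul_eq_one_left
  rw [DihedralGroup.r_mul_r, neg_add_cancel, DihedralGroup.one_def]

lemma dihedral_r_one_zpow {m : ℕ} (k : ℤ) :
    (DihedralGroup.r 1 : DihedralGroup m) ^ k = DihedralGroup.r (k : ZMod m) := by
  rcases k with k | k
  · rw [Int.ofNat_eq_coe, zpow_natCast, DihedralGroup.r_one_pow]
    norm_cast
  · rw [zpow_negSucc, DihedralGroup.r_one_pow, dihedral_inv_r]
    congr 1
    push_cast
    ring

lemma dihedral_mem_zpowers_r_one_iff {m : ℕ} [NeZero m] (x : DihedralGroup m) :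
    x ∈ Subgroup.zpowers (DihedralGroup.r (1 : ZMod m)) ↔ ∃ i : ZMod m, x = DihedralGroup.r i := by
  constructor
  · intro hx
    obtain ⟨k, hk⟩ := Subgroup.mem_zpowers_iff.mp hx
    exact ⟨(k : ZMod m), by rw [← hk, dihedral_r_one_zpow]⟩
  · rintro ⟨i, rfl⟩
    refine Subgroup.mem_zpowers_iff.mpr ⟨(i.val : ℤ), ?_⟩
    rw [dihedral_r_one_zpow]
    congr 1
    push_cast
    rw [ZMod.natCast_val, ZMod.cast_id]

lemma dihedral_subgroup (m : ℕ) [NeZero m] (S : Subgroup (DihedralGroup m)) :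
    IsCyclicOrDihedral ↥S := by
  set R := Subgroup.zpowers (DihedralGroup.r (1 : ZMod m)) with hRdef
  have hrmem : ∀ i : ZMod m, DihedralGroup.r i ∈ R := fun i =>
    (dihedral_mem_zpowers_r_one_iff _).mpr ⟨i, rfl⟩
  have hsrmem : ∀ i : ZMod m, DihedralGroup.sr i ∉ R := by
    intro i hi
    obtain ⟨j, hj⟩ := (dihedral_mem_zpowers_r_one_iff _).mp hi
    cases hj
  by_cases hSR : S ≤ R
  · exact Or.inl (isCyclic_of_le_zpowers hSR)
  · obtain ⟨t₀, ht₀S, ht₀R⟩ := SetLike.not_le_iff_exists.mp hSR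
    obtain ⟨j, rfl⟩ : ∃ j, t₀ = DihedralGroup.sr j := by
      cases t₀ with
      | r i => exact absurd (hrmem i) ht₀R
      | sr j => exact ⟨j, rfl⟩
    have hCle : S ⊓ R ≤ R := inf_le_right
    haveI : IsCyclic ↥(S ⊓ R) := isCyclic_of_le_zpowers hCle
    obtain ⟨g, hg⟩ := IsCyclic.exists_generator (α := ↥(S ⊓ R))
    have hgS : (g : DihedralGroup m) ∈ S := g.2.1
    have hgR : (g : DihedralGroup m) ∈ R := g.2.2
    have hzc : ∀ x : DihedralGroup m, x ∈ S ⊓ R → x ∈ Subgroup.zpowers (g : DihedralGroup m) := by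
      intro x hx
      obtain ⟨k, hk⟩ := Subgroup.mem_zpowers_iff.mp (hg ⟨x, hx⟩)
      exact Subgroup.mem_zpowers_iff.mpr ⟨k, by simpa using congrArg Subtype.val hk⟩
    set c : ↥S := ⟨(g : DihedralGroup m), hgS⟩ with hcdef
    set t : ↥S := ⟨DihedralGroup.sr j, ht₀S⟩ with htdef
    have hcoe_pow : ∀ k : ℤ, ((c ^ k : ↥S) : DihedralGroup m) = (g : DihedralGroup m) ^ k := by
      intro k; simp [hcdef]
    refine Or.inr (dihedral_of_gen c t ?_ ?_ ?_ ?_)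
    · ext
      show DihedralGroup.sr j * DihedralGroup.sr j = 1
      rw [DihedralGroup.sr_mul_sr, sub_self, DihedralGroup.one_def]
    · obtain ⟨d, hd⟩ := (dihedral_mem_zpowers_r_one_iff _).mp hgR
      ext
      show DihedralGroup.sr j * (g : DihedralGroup m) * DihedralGroup.sr j = _
      have : ((c⁻¹ : ↥S) : DihedralGroup m) = (g : DihedralGroup m)⁻¹ := by simp [hcdef]
      rw [this, hd, DihedralGroup.sr_mul_r, DihedralGroup.sr_mul_sr, dihedral_inv_r]
      congr 1
      ring
    · intro ht
      obtain ⟨k, hk⟩ := Subgroup.mem_zpowers_iff.mp ht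
      apply hsrmem j
      have : ((g : DihedralGroup m)) ^ k = DihedralGroup.sr j := by
        rw [← hcoe_pow k, hk]
      rw [← this]
      exact Subgroup.zpow_mem R hgR k
    · intro x
      by_cases hx : (x : DihedralGroup m) ∈ R
      · left
        obtain ⟨k, hk⟩ := Subgroup.mem_zpowers_iff.mp (hzc x ⟨x.2, hx⟩)
        exact Subgroup.mem_zpowers_iff.mpr ⟨k, by ext; rw [hcoe_pow k, hk]⟩
      · right
        obtain ⟨a, ha⟩ : ∃ a, (x : DihedralGroup m) = DihedralGroup.sr a := by
          rcases hxv : (x : DihedralGroup m) with i | a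
          · exact absurd (hxv ▸ hrmem i) hx
          · exact ⟨a, rfl⟩
        have htx : ((t * x : ↥S) : DihedralGroup m) ∈ R := by
          show (DihedralGroup.sr j * (x : DihedralGroup m)) ∈ R
          rw [ha, DihedralGroup.sr_mul_sr]
          exact hrmem _
        obtain ⟨k, hk⟩ := Subgroup.mem_zpowers_iff.mp (hzc _ ⟨(t * x).2, htx⟩)
        exact Subgroup.mem_zpowers_iff.mpr ⟨k, by ext; rw [hcoe_pow k, hk]⟩

lemma subgroup_cyclicOrDihedral {H : Type*} [Group H] [Finite H]
    (hH : IsCyclicOrDihedral H) (S : Subgroup H) : IsCyclicOrDihedral ↥S := by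
  rcases hH with hH | ⟨n, hn, ⟨e⟩⟩
  · haveI := hH
    exact Or.inl inferInstance
  · haveI : NeZero n := ⟨hn.ne'⟩
    have h1 := dihedral_subgroup n (S.map e.toMonoidHom)
    exact isCyclicOrDihedral_congr
      ((S.equivMapOfInjective e.toMonoidHom e.injective)).symm h1

lemma sylow_key {G : Type*} [Group G] [Finite G] {r : ℕ} [Fact r.Prime] (S : Sylow r G)
    (H : Subgroup G) (hH : IsCyclicOrDihedral H)
    (hf : (Nat.card G).factorization r = (Nat.card ↥H).factorization r) :
    IsCyclicOrDihedral ↥(S : Subgroup G) := by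
  obtain ⟨T⟩ : Nonempty (Sylow r ↥H) := inferInstance
  set T' : Subgroup G := (T : Subgroup ↥H).map H.subtype with hT'def
  have eT : ↥(T : Subgroup ↥H) ≃* ↥T' :=
    (T : Subgroup ↥H).equivMapOfInjective H.subtype H.subtype_injective
  have hTcard : Nat.card ↥T' = r ^ (Nat.card G).factorization r := by
    rw [hf, ← T.card_eq_multiplicity]
    exact (Nat.card_congr eT.toEquiv).symm
  have hTp : IsPGroup r T' := T.2.map H.subtype
  obtain ⟨Q, hQ⟩ := hTp.exists_le_sylow
  have hQT : T' = Q := Subgroup.eq_of_le_of_card_ge hQ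
    (by rw [hTcard, Q.card_eq_multiplicity])
  obtain ⟨gconj, hgconj⟩ := MulAction.exists_smul_eq G Q S
  have hSQ : (S : Subgroup G) = MulAut.conj gconj • (Q : Subgroup G) := by
    rw [← hgconj]; rfl
  have e1 : ↥(Q : Subgroup G) ≃* ↥(S : Subgroup G) :=
    (Subgroup.equivSMul (MulAut.conj gconj) (Q : Subgroup G)).trans
      (MulEquiv.subgroupCongr hSQ.symm)
  have e2 : ↥(T : Subgroup ↥H) ≃* ↥(S : Subgroup G) :=
    (eT.trans (MulEquiv.subgroupCongr hQT)).trans e1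
  exact isCyclicOrDihedral_congr e2 (subgroup_cyclicOrDihedral hH (T : Subgroup ↥H))

end Auxiliary

/-- If a finite group `G` is a `𝒫₁(p)`-group, then it is a `𝒫₂(p)`-group. -/
theorem stmt2 {G : Type*} [Group G] [Finite G] {p : ℕ} (hp : p.Prime)
    (h : IsP1 p G) : IsP2 p G := by
  obtain ⟨H₁, H₂, hcd1, hcd2, n, hcard⟩ := h
  intro r hr hrp S
  haveI : Fact r.Prime := ⟨hr⟩
  have h1 : Nat.card ↥H₁ ≠ 0 := Nat.card_pos.ne'
  have h2 : Nat.card ↥H₂ ≠ 0 := Nat.card_pos.ne'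
  have hk : (Nat.card G).factorization r
      = max ((Nat.card ↥H₁).factorization r) ((Nat.card ↥H₂).factorization r) := by
    rw [hcard, Nat.factorization_mul (pow_ne_zero n hp.pos.ne') (Nat.lcm_ne_zero h1 h2),
      Nat.factorization_lcm h1 h2]
    simp [Nat.factorization_pow, Nat.Prime.factorization hp, Finsupp.single_apply,
      Finsupp.add_apply, Finsupp.sup_apply, Ne.symm hrp]
  rcases le_total ((Nat.card ↥H₂).factorization r) ((Nat.card ↥H₁).factorization r) with hle | hle
  · exact sylow_key S H₁ hcd1 (by rw [hk, max_eq_left hle])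
  · exact sylow_key S H₂ hcd2 (by rw [hk, max_eq_right hle])
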